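/- The function η ↦ 1 − η + η·e^{1 + W((1−η)/(ηe))} is strictly increasing on (0, 1), where W is the principal Lambert W function. -/
import Mathlib

/-- Key inequality: for `0 < B < A`, `A e^A < (A-B) e^{A+B} + B e^B`. -/
lemma key_ineq (A B : ℝ) (hB : 0 < B) (hAB : B < A) :
    A * Real.exp A < (A - B) * Real.exp (A + B) + B * Real.exp B := by
  set d := A - B with hd
  have hd0 : 0 < d := by simp only [hd]; linarith
  have h1 : B + 1 < Real.exp B := Real.add_one_lt_exp (ne_of_gt hB)
  have h2 : (1 - d) * Real.exp d ≤ 1 := by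
    have h3 := Real.add_one_le_exp (-d)
    have h4 : Real.exp (-d) * Real.exp d = 1 := by
      rw [← Real.exp_add]; simp
    nlinarith [Real.exp_pos d]
  have hA : A = B + d := by simp only [hd]; ring
  have heA : Real.exp A = Real.exp d * Real.exp B := by
    rw [hA, add_comm, Real.exp_add]
  have heAB : Real.exp (A + B) = Real.exp d * Real.exp B * Real.exp B := by
    rw [hA, show B + d + B = d + (B + B) by ring, Real.exp_add, Real.exp_add]
    ring
  rw [heA, heAB, hA]
  have hEd := Real.exp_pos d
  have hEB := Real.exp_pos B
  nlinarith [mul_pos (mul_pos (mul_pos hd0 hEd) hEB) (by linarith : (0:ℝ) < Real.exp B - 1 - B),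
    mul_nonneg (mul_nonneg hB.le hEB.le) (by linarith : (0:ℝ) ≤ 1 - (1 - d) * Real.exp d)]

theorem stmt_14 (W : ℝ → ℝ)
    (hW : ∀ z : ℝ, 0 ≤ z → 0 ≤ W z ∧ W z * Real.exp (W z) = z) :
    StrictMonoOn
      (fun η : ℝ => 1 - η + η * Real.exp (1 + W ((1 - η) / (η * Real.exp 1))))
      (Set.Ioo (0 : ℝ) 1) := by
  intro a ha b hb hab
  obtain ⟨ha0, ha1⟩ := ha
  obtain ⟨hb0, hb1⟩ := hb
  have he := Real.exp_pos 1
  have hza : 0 < (1 - a) / (a * Real.exp 1) := div_pos (by linarith) (by positivity)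
  have hzb : 0 < (1 - b) / (b * Real.exp 1) := div_pos (by linarith) (by positivity)
  obtain ⟨hwa0, hwa⟩ := hW _ hza.le
  obtain ⟨hwb0, hwb⟩ := hW _ hzb.le
  set wa := W ((1 - a) / (a * Real.exp 1)) with hwa_def
  set wb := W ((1 - b) / (b * Real.exp 1)) with hwb_def
  -- wa > 0 and wb > 0
  have hwa' : 0 < wa := by
    rcases hwa0.lt_or_eq with h | h
    · exact h
    · exfalso; rw [← h] at hwa; simp at hwa; linarith
  have hwb' : 0 < wb := by
    rcases hwb0.lt_or_eq with h | h
    · exact h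
    · exfalso; rw [← h] at hwb; simp at hwb; linarith
  -- za > zb
  have hzab : (1 - b) / (b * Real.exp 1) < (1 - a) / (a * Real.exp 1) := by
    rw [div_lt_div_iff₀ (by positivity) (by positivity)]
    nlinarith
  -- wb < wa
  have hlt : wb < wa := by
    by_contra h
    push_neg at h
    have : wa * Real.exp wa ≤ wb * Real.exp wb :=
      mul_le_mul h (Real.exp_le_exp.mpr h) (Real.exp_pos wa).le hwb0
    rw [hwa, hwb] at this
    linarith
  have hEa := Real.exp_pos (1 + wa)
  have hEb := Real.exp_pos (1 + wb)
  -- key relations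
  have ha' : 1 - a = a * wa * Real.exp (1 + wa) := by
    rw [eq_div_iff (by positivity : a * Real.exp 1 ≠ 0)] at hwa
    rw [Real.exp_add]
    linear_combination -hwa
  have hb' : 1 - b = b * wb * Real.exp (1 + wb) := by
    rw [eq_div_iff (by positivity : b * Real.exp 1 ≠ 0)] at hwb
    rw [Real.exp_add]
    linear_combination -hwb
  have hDa : a * (1 + wa * Real.exp (1 + wa)) = 1 := by linear_combination -ha'
  have hDb : b * (1 + wb * Real.exp (1 + wb)) = 1 := by linear_combination -hb'
  have hDapos : 0 < 1 + wa * Real.exp (1 + wa) := by positivity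
  have hDbpos : 0 < 1 + wb * Real.exp (1 + wb) := by positivity
  -- key inequality in the right shape
  have hk : (wa + 1) * Real.exp (1 + wa) <
      (wa - wb) * (Real.exp (1 + wa) * Real.exp (1 + wb)) + (wb + 1) * Real.exp (1 + wb) := by
    have h := key_ineq (wa + 1) (wb + 1) (by linarith) (by linarith)
    have e3 : Real.exp ((wa + 1) + (wb + 1)) = Real.exp (1 + wa) * Real.exp (1 + wb) := by
      rw [show (wa + 1) + (wb + 1) = (1 + wa) + (1 + wb) by ring, Real.exp_add]
    have e1 : Real.exp (wa + 1) = Real.exp (1 + wa) := by rw [add_comm]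
    have e2 : Real.exp (wb + 1) = Real.exp (1 + wb) := by rw [add_comm]
    rw [e3, e1, e2] at h
    linear_combination h
  -- rewrite the function values
  simp only
  have hfa : 1 - a + a * Real.exp (1 + wa) = ((wa + 1) * Real.exp (1 + wa)) * a := by
    rw [ha']; ring
  have hfb : 1 - b + b * Real.exp (1 + wb) = ((wb + 1) * Real.exp (1 + wb)) * b := by
    rw [hb']; ring
  rw [hfa, hfb]
  have haD : a = 1 / (1 + wa * Real.exp (1 + wa)) := eq_div_of_mul_eq (ne_of_gt hDapos) hDa
  have hbD : b = 1 / (1 + wb * Real.exp (1 + wb)) := eq_div_of_mul_eq (ne_of_gt hDbpos) hDb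
  rw [haD, hbD, mul_one_div, mul_one_div, div_lt_div_iff₀ hDapos hDbpos]
  nlinarith [hk]
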